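/- Inverse representation via discrete differences: for order k >= 0 and sorted inputs x_1 < ... < x_n, the last n-k-1 rows of the inverse of the k-th order falling factorial basis matrix H^(k) equal (1/k!) · D^(k+1), where D^(k+1) is the (k+1)-st order discrete difference operator adjusted for the input spacings. -/

import Mathlib

/-- The `k`-th order falling factorial basis function `h_j` (0-based index `j`)
over input points `xs`. -/
noncomputable def ffh (k : ℕ) (xs : ℕ → ℝ) (j : ℕ) (x : ℝ) : ℝ :=
  if j ≤ k then ∏ ℓ ∈ Finset.range j, (x - xs ℓ)
  else (∏ ℓ ∈ Finset.range k, (x - xs (j - k + ℓ))) * (if xs (j - 1) < x then 1 else 0)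

/-- The falling factorial basis matrix `H^(k)`, with `H_{ij} = h_j(x_i)`. -/
noncomputable def ffMatrix (n k : ℕ) (xs : ℕ → ℝ) : Matrix (Fin n) (Fin n) ℝ :=
  Matrix.of fun i j => ffh k xs j (xs i)
/-- The discrete difference operators `D^(k)` over inputs `xs` (as entry functions,
row `i`, column `j`, both 0-based):  `D^(1)` has rows `(…, -1, 1, …)`, and
`D^(k+1) = D^(1) ⬝ k (Δ^(k))⁻¹ ⬝ D^(k)` with `Δ^(k) = diag(x_{k+1}-x_1, …)`. -/
noncomputable def Dop (xs : ℕ → ℝ) : ℕ → ℕ → ℕ → ℝ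
  | 0 => fun i j => if j = i then 1 else 0
  | 1 => fun i j => if j = i then -1 else if j = i + 1 then 1 else 0
  | (k + 2) => fun i j =>
      ((k + 1 : ℕ) : ℝ) *
        (Dop xs (k + 1) (i + 1) j / (xs (k + 1 + (i + 1)) - xs (i + 1)) -
         Dop xs (k + 1) i j / (xs (k + 1 + i) - xs i))


section Aux

open Polynomial Finset


lemma leadingCoeff_basisDivisor {x y : ℝ} (h : x ≠ y) :
    (Lagrange.basisDivisor x y).leadingCoeff = (x - y)⁻¹ := by
  unfold Lagrange.basisDivisor
  rw [leadingCoeff_mul, leadingCoeff_C, (monic_X_sub_C y).leadingCoeff, mul_one]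

lemma coeff_lagrange_basis {s : Finset ℕ} {v : ℕ → ℝ} (hvs : Set.InjOn v s) {i : ℕ}
    (hi : i ∈ s) :
    (Lagrange.basis s v i).coeff (#s - 1) = (∏ j ∈ s.erase i, (v i - v j))⁻¹ := by
  have hdeg := Lagrange.degree_basis hvs hi
  have hnd : (Lagrange.basis s v i).natDegree = #s - 1 :=
    natDegree_eq_of_degree_eq_some hdeg
  rw [← hnd, coeff_natDegree]
  unfold Lagrange.basis
  rw [leadingCoeff_prod, ← prod_inv_distrib]
  refine prod_congr rfl fun j hj => ?_
  have hji : j ≠ i := (mem_erase.mp hj).1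
  exact leadingCoeff_basisDivisor fun hh => hji ((hvs (mem_of_mem_erase hj) hi hh.symm).symm ▸ rfl)

lemma dd_sum {s : Finset ℕ} {v : ℕ → ℝ} (hvs : Set.InjOn v s) (p : ℝ[X])
    (hp : p.degree < #s) (f : ℕ → ℝ) (hf : ∀ m ∈ s, f m = p.eval (v m)) :
    ∑ m ∈ s, f m * (∏ ℓ ∈ s.erase m, (v m - v ℓ))⁻¹ = p.coeff (#s - 1) := by
  conv_rhs => rw [Lagrange.eq_interpolate hvs hp]
  rw [Lagrange.interpolate_apply, finset_sum_coeff]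
  refine (sum_congr rfl fun m hm => ?_).symm
  rw [coeff_C_mul, coeff_lagrange_basis hvs hm, hf m hm]

noncomputable def ddc (xs : ℕ → ℝ) (d r j : ℕ) : ℝ :=
  if j ∈ Finset.Icc r (r + d) then
    (∏ ℓ ∈ (Finset.Icc r (r + d)).erase j, (xs j - xs ℓ))⁻¹ else 0

variable {xs : ℕ → ℝ} (hxs : StrictMono xs)

include hxs in
lemma xs_sub_ne (a b : ℕ) (h : a ≠ b) : xs a - xs b ≠ 0 := by
  rcases h.lt_or_gt with h | h
  · exact sub_ne_zero.mpr (hxs h).ne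
  · exact sub_ne_zero.mpr (hxs h).ne'

include hxs in
lemma ddc_rec (d r j : ℕ) :
    (xs (r + (d + 1)) - xs r) * ddc xs (d + 1) r j =
      ddc xs d (r + 1) j - ddc xs d r j := by
  unfold ddc
  have hne := xs_sub_ne hxs
  rcases Nat.lt_or_ge j r with hj | hj
  · rw [if_neg (by simp only [Finset.mem_Icc]; omega),
      if_neg (by simp only [Finset.mem_Icc]; omega),
      if_neg (by simp only [Finset.mem_Icc]; omega)]
    simp
  rcases Nat.lt_or_ge (r + d + 1) j with hj2 | hj2
  · rw [if_neg (by simp only [Finset.mem_Icc]; omega),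
      if_neg (by simp only [Finset.mem_Icc]; omega),
      if_neg (by simp only [Finset.mem_Icc]; omega)]
    simp
  rcases Nat.eq_or_lt_of_le hj with hje | hjr
  · -- r = r
    subst hje
    rw [if_pos (Finset.mem_Icc.mpr (by omega)),
      if_neg (by simp only [Finset.mem_Icc]; omega),
      if_pos (Finset.mem_Icc.mpr (by omega))]
    set A := ∏ ℓ ∈ Finset.Icc (r + 1) (r + d), (xs r - xs ℓ) with hA_def
    have pe1 : ∏ ℓ ∈ (Finset.Icc r (r + (d + 1))).erase r, (xs r - xs ℓ)
        = (xs r - xs (r + d + 1)) * A := by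
      have e : (Finset.Icc r (r + (d + 1))).erase r
          = insert (r + d + 1) (Finset.Icc (r + 1) (r + d)) := by
        ext a; simp only [Finset.mem_erase, Finset.mem_Icc, Finset.mem_insert]; omega
      rw [e, Finset.prod_insert (by simp only [Finset.mem_Icc]; omega)]
    have pe3 : ∏ ℓ ∈ (Finset.Icc r (r + d)).erase r, (xs r - xs ℓ) = A := by
      have e : (Finset.Icc r (r + d)).erase r = Finset.Icc (r + 1) (r + d) := by
        ext a; simp only [Finset.mem_erase, Finset.mem_Icc]; omega
      rw [e]
    rw [pe1, pe3]
    have hA : A ≠ 0 :=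
      Finset.prod_ne_zero_iff.mpr fun a ha => hne _ _
        (by simp only [Finset.mem_Icc] at ha; omega)
    have hb : xs r - xs (r + d + 1) ≠ 0 := hne _ _ (by omega)
    have hadd : r + (d + 1) = r + d + 1 := by omega
    rw [hadd]
    field_simp
    ring
  rcases Nat.eq_or_lt_of_le hj2 with hje | hjlt
  · -- j = r + d + 1
    subst hje
    rw [if_pos (Finset.mem_Icc.mpr (by omega)),
      if_pos (Finset.mem_Icc.mpr (by omega)),
      if_neg (by simp only [Finset.mem_Icc]; omega)]
    set A := ∏ ℓ ∈ Finset.Icc (r + 1) (r + d), (xs (r + d + 1) - xs ℓ) with hA_def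
    have pe1 : ∏ ℓ ∈ (Finset.Icc r (r + (d + 1))).erase (r + d + 1), (xs (r + d + 1) - xs ℓ)
        = (xs (r + d + 1) - xs r) * A := by
      have e : (Finset.Icc r (r + (d + 1))).erase (r + d + 1)
          = insert r (Finset.Icc (r + 1) (r + d)) := by
        ext a; simp only [Finset.mem_erase, Finset.mem_Icc, Finset.mem_insert]; omega
      rw [e, Finset.prod_insert (by simp only [Finset.mem_Icc]; omega)]
    have pe2 : ∏ ℓ ∈ (Finset.Icc (r + 1) (r + 1 + d)).erase (r + d + 1), (xs (r + d + 1) - xs ℓ)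
        = A := by
      have e : (Finset.Icc (r + 1) (r + 1 + d)).erase (r + d + 1)
          = Finset.Icc (r + 1) (r + d) := by
        ext a; simp only [Finset.mem_erase, Finset.mem_Icc]; omega
      rw [e]
    rw [pe1, pe2]
    have hA : A ≠ 0 :=
      Finset.prod_ne_zero_iff.mpr fun a ha => hne _ _
        (by simp only [Finset.mem_Icc] at ha; omega)
    have hb : xs (r + d + 1) - xs r ≠ 0 := hne _ _ (by omega)
    have hadd : r + (d + 1) = r + d + 1 := by omega
    rw [hadd]
    field_simp
    ring
  · -- interior: r < j < r + d + 1
    rw [if_pos (Finset.mem_Icc.mpr (by omega)),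
      if_pos (Finset.mem_Icc.mpr (by omega)),
      if_pos (Finset.mem_Icc.mpr (by omega))]
    set A := ∏ ℓ ∈ (Finset.Icc (r + 1) (r + d)).erase j, (xs j - xs ℓ) with hA_def
    have pe1 : ∏ ℓ ∈ (Finset.Icc r (r + (d + 1))).erase j, (xs j - xs ℓ)
        = (xs j - xs r) * ((xs j - xs (r + d + 1)) * A) := by
      have e : (Finset.Icc r (r + (d + 1))).erase j
          = insert r (insert (r + d + 1) ((Finset.Icc (r + 1) (r + d)).erase j)) := by
        ext a
        simp only [Finset.mem_erase, Finset.mem_Icc, Finset.mem_insert]; omega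
      rw [e, Finset.prod_insert (by
          simp only [Finset.mem_insert, Finset.mem_erase, Finset.mem_Icc]; omega),
        Finset.prod_insert (by
          simp only [Finset.mem_erase, Finset.mem_Icc]; omega)]
    have pe2 : ∏ ℓ ∈ (Finset.Icc (r + 1) (r + 1 + d)).erase j, (xs j - xs ℓ)
        = (xs j - xs (r + d + 1)) * A := by
      have e : (Finset.Icc (r + 1) (r + 1 + d)).erase j
          = insert (r + d + 1) ((Finset.Icc (r + 1) (r + d)).erase j) := by
        ext a
        simp only [Finset.mem_erase, Finset.mem_Icc, Finset.mem_insert]; omega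
      rw [e, Finset.prod_insert (by
          simp only [Finset.mem_erase, Finset.mem_Icc]; omega)]
    have pe3 : ∏ ℓ ∈ (Finset.Icc r (r + d)).erase j, (xs j - xs ℓ)
        = (xs j - xs r) * A := by
      have e : (Finset.Icc r (r + d)).erase j
          = insert r ((Finset.Icc (r + 1) (r + d)).erase j) := by
        ext a
        simp only [Finset.mem_erase, Finset.mem_Icc, Finset.mem_insert]; omega
      rw [e, Finset.prod_insert (by
          simp only [Finset.mem_erase, Finset.mem_Icc]; omega)]
    rw [pe1, pe2, pe3]
    have hA : A ≠ 0 :=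
      Finset.prod_ne_zero_iff.mpr fun a ha => by
        simp only [Finset.mem_erase, Finset.mem_Icc] at ha
        exact hne _ _ (by omega)
    have ha : xs j - xs r ≠ 0 := hne _ _ (by omega)
    have hb : xs j - xs (r + d + 1) ≠ 0 := hne _ _ (by omega)
    have hadd : r + (d + 1) = r + d + 1 := by omega
    rw [hadd]
    field_simp
    ring

lemma ddc_zero (r j : ℕ) : ddc xs 0 r j = if j = r then 1 else 0 := by
  unfold ddc
  by_cases h : j = r
  · subst h
    rw [if_pos (by simp), if_pos rfl]
    simp [Finset.Icc_self]
  · rw [if_neg (by simp only [Finset.mem_Icc]; omega), if_neg h]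

include hxs in
lemma Dop_eq' (d : ℕ) : ∀ r j, Dop xs (d + 1) r j =
    (Nat.factorial d : ℝ) * ((xs (r + (d + 1)) - xs r) * ddc xs (d + 1) r j) := by
  induction d with
  | zero =>
    intro r j
    rw [ddc_rec hxs 0 r j, ddc_zero, ddc_zero]
    show (if j = r then (-1 : ℝ) else if j = r + 1 then 1 else 0) = _
    by_cases h1 : j = r
    · subst h1; simp [Nat.factorial]
    · by_cases h2 : j = r + 1
      · subst h2
        simp only [if_neg h1, if_pos rfl, Nat.factorial]
        have : ¬ (r + 1 = r) := by omega
        simp [this]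
      · simp [h1, h2]
  | succ d IH =>
    intro r j
    show ((d + 1 : ℕ) : ℝ) *
        (Dop xs (d + 1) (r + 1) j / (xs (d + 1 + (r + 1)) - xs (r + 1)) -
         Dop xs (d + 1) r j / (xs (d + 1 + r) - xs r)) = _
    have e1 : d + 1 + (r + 1) = r + 1 + (d + 1) := by omega
    have e2 : d + 1 + r = r + (d + 1) := by omega
    rw [e1, e2, IH, IH, Nat.factorial_succ]
    have hrec := ddc_rec hxs (d + 1) r j
    rw [hrec]
    have h1 : xs (r + 1 + (d + 1)) - xs (r + 1) ≠ 0 := xs_sub_ne hxs _ _ (by omega)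
    have h2 : xs (r + (d + 1)) - xs r ≠ 0 := xs_sub_ne hxs _ _ (by omega)
    push_cast
    field_simp

include hxs in
lemma dd_sum_icc (d r : ℕ) (p : ℝ[X]) (hp : p.natDegree ≤ d) (f : ℕ → ℝ)
    (hf : ∀ m ∈ Finset.Icc r (r + d), f m = p.eval (xs m)) :
    ∑ m ∈ Finset.Icc r (r + d), ddc xs d r m * f m = p.coeff d := by
  have hcard : #(Finset.Icc r (r + d)) = d + 1 := by rw [Nat.card_Icc]; omega
  have hdeg : p.degree < #(Finset.Icc r (r + d)) := by
    rw [hcard]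
    exact lt_of_le_of_lt degree_le_natDegree (by exact_mod_cast Nat.lt_succ_of_le hp)
  have := dd_sum (hxs.injective.injOn) p hdeg f hf
  rw [hcard] at this
  simp only [Nat.add_sub_cancel] at this
  rw [← this]
  refine Finset.sum_congr rfl fun m hm => ?_
  unfold ddc
  rw [if_pos hm, mul_comm]

lemma sum_range_ddc (n d r : ℕ) (h : r + d < n) (f : ℕ → ℝ) :
    ∑ m ∈ Finset.range n, ddc xs d r m * f m
      = ∑ m ∈ Finset.Icc r (r + d), ddc xs d r m * f m := by
  refine (Finset.sum_subset (fun a ha => Finset.mem_range.mpr ?_) (fun a _ ha => ?_)).symm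
  · have := Finset.mem_Icc.mp ha; omega
  · unfold ddc; rw [if_neg ha, zero_mul]

-- polynomial helpers
lemma plow_monic (v : ℕ → ℝ) (j : ℕ) : (∏ ℓ ∈ range j, (X - C (v ℓ))).Monic :=
  monic_prod_of_monic _ _ fun _ _ => monic_X_sub_C _

lemma plow_natDegree (v : ℕ → ℝ) (j : ℕ) :
    (∏ ℓ ∈ range j, (X - C (v ℓ))).natDegree = j := by
  rw [natDegree_prod_of_monic _ _ fun _ _ => monic_X_sub_C _]
  simp [natDegree_X_sub_C]

lemma plow_eval (v : ℕ → ℝ) (j : ℕ) (x : ℝ) :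
    (∏ ℓ ∈ range j, (X - C (v ℓ))).eval x = ∏ ℓ ∈ range j, (x - v ℓ) := by
  simp [eval_prod]

-- ffh evaluation lemmas
lemma ffh_low {k j : ℕ} (hjk : j ≤ k) (x : ℝ) :
    ffh k xs j x = (∏ ℓ ∈ range j, (X - C (xs ℓ))).eval x := by
  unfold ffh; rw [if_pos hjk, plow_eval]

include hxs in
lemma ffh_high_of_ge {k j m : ℕ} (hjk : k < j) (hm : j ≤ m) :
    ffh k xs j (xs m) = (∏ ℓ ∈ range k, (X - C (xs (j - k + ℓ)))).eval (xs m) := by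
  unfold ffh
  rw [if_neg (by omega), if_pos (hxs (by omega)), mul_one, plow_eval]

include hxs in
lemma ffh_high_of_lt {k j m : ℕ} (hjk : k < j) (hm : m < j) :
    ffh k xs j (xs m) = 0 := by
  unfold ffh
  rw [if_neg (by omega), if_neg (not_lt.mpr (hxs.monotone (by omega))), mul_zero]

lemma phigh_eval_zero {k j m : ℕ} (h1 : j - k ≤ m) (h2 : m < j) (hjk : k < j) :
    (∏ ℓ ∈ range k, (X - C (xs (j - k + ℓ)))).eval (xs m) = 0 := by
  rw [plow_eval]
  refine Finset.prod_eq_zero (i := m - (j - k)) (Finset.mem_range.mpr (by omega)) ?_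
  have : j - k + (m - (j - k)) = m := by omega
  rw [this, sub_self]

noncomputable def Bmat (n k : ℕ) (xs : ℕ → ℝ) : Matrix (Fin n) (Fin n) ℝ :=
  Matrix.of fun i j => if (i : ℕ) ≤ k then ddc xs i 0 j
    else (xs i - xs ((i : ℕ) - (k + 1))) * ddc xs (k + 1) ((i : ℕ) - (k + 1)) j


include hxs in
lemma BH_eq_one (n k : ℕ) (hkn : k + 1 < n) :
    Bmat n k xs * ffMatrix n k xs = 1 := by
  ext i j
  rw [Matrix.mul_apply, Matrix.one_apply]
  simp only [Bmat, ffMatrix, Matrix.of_apply]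
  have hij : (i = j) ↔ ((i : ℕ) = (j : ℕ)) := Fin.ext_iff
  by_cases hik : (i : ℕ) ≤ k
  · -- top rows
    simp only [if_pos hik]
    rw [Fin.sum_univ_eq_sum_range (fun m => ddc xs (i : ℕ) 0 m * ffh k xs (j : ℕ) (xs m)) n]
    rw [sum_range_ddc n (i : ℕ) 0 (by omega) _]
    by_cases hji : (j : ℕ) ≤ (i : ℕ)
    · -- use polynomial of degree j
      have hjk : (j : ℕ) ≤ k := le_trans hji hik
      rw [dd_sum_icc hxs (i : ℕ) 0 (∏ ℓ ∈ range (j : ℕ), (X - C (xs ℓ)))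
        (by rw [plow_natDegree]; omega) _ (fun m _ => ffh_low hjk (xs m))]
      by_cases hije : (i : ℕ) = (j : ℕ)
      · rw [if_pos (hij.mpr hije)]
        have h := (plow_monic xs ((j : ℕ))).coeff_natDegree
        rw [plow_natDegree] at h
        rw [← hije] at h ⊢
        exact h
      · rw [if_neg (fun h => hije (hij.mp h)), coeff_eq_zero_of_natDegree_lt]
        rw [plow_natDegree]; omega
    · -- j > i : every node value is 0
      push_neg at hji
      rw [if_neg (fun h => by have := hij.mp h; omega)]
      refine Finset.sum_eq_zero fun m hm => ?_
      rw [Finset.mem_Icc] at hm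
      have hmi : m < (j : ℕ) := by omega
      by_cases hjk : (j : ℕ) ≤ k
      · rw [ffh_low hjk, plow_eval,
          Finset.prod_eq_zero (Finset.mem_range.mpr hmi) (sub_self (xs m)), mul_zero]
      · rw [ffh_high_of_lt hxs (by omega) hmi, mul_zero]
  · -- lower rows
    push_neg at hik
    set r := (i : ℕ) - (k + 1) with hr_def
    have hrk : r + (k + 1) = (i : ℕ) := by omega
    simp only [if_neg (not_le.mpr hik)]
    have hpull : ∀ S : Finset (Fin n),
        ∑ m ∈ S, (xs i - xs r) * ddc xs (k+1) r m * ffh k xs (j : ℕ) (xs m)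
        = (xs i - xs r) * ∑ m ∈ S, ddc xs (k+1) r m * ffh k xs (j : ℕ) (xs m) := by
      intro S; rw [Finset.mul_sum]; exact Finset.sum_congr rfl fun m _ => by ring
    rw [hpull]
    rw [Fin.sum_univ_eq_sum_range (fun m => ddc xs (k+1) r m * ffh k xs (j : ℕ) (xs m)) n]
    rw [sum_range_ddc n (k + 1) r (by omega) _]
    by_cases hjk : (j : ℕ) ≤ k
    · -- polynomial of degree ≤ k, (k+1)-coeff is 0
      rw [dd_sum_icc hxs (k + 1) r (∏ ℓ ∈ range (j : ℕ), (X - C (xs ℓ)))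
        (by rw [plow_natDegree]; omega) _ (fun m _ => ffh_low hjk (xs m))]
      rw [coeff_eq_zero_of_natDegree_lt (by rw [plow_natDegree]; omega), mul_zero]
      rw [if_neg (fun h => by have := hij.mp h; omega)]
    · push_neg at hjk
      rcases lt_trichotomy (j : ℕ) (i : ℕ) with hji | hji | hji
      · -- j < i : h_j agrees with the degree-k polynomial on all nodes
        rw [dd_sum_icc hxs (k + 1) r (∏ ℓ ∈ range k, (X - C (xs ((j : ℕ) - k + ℓ))))
          (by rw [plow_natDegree]; omega) _ ?_]
        · rw [coeff_eq_zero_of_natDegree_lt (by rw [plow_natDegree]; omega), mul_zero,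
            if_neg (fun h => by have := hij.mp h; omega)]
        · intro m hm
          rw [Finset.mem_Icc] at hm
          rcases Nat.lt_or_ge m (j : ℕ) with hmj | hmj
          · rw [ffh_high_of_lt hxs hjk hmj]
            exact (phigh_eval_zero (by omega) hmj hjk).symm
          · exact ffh_high_of_ge hxs hjk hmj
      · -- j = i : the crucial diagonal case
        rw [if_pos (hij.mpr hji.symm)]
        set p : ℝ[X] := ∏ ℓ ∈ range k, (X - C (xs ((j : ℕ) - k + ℓ))) with hp_def
        have hsplit : ∀ m ∈ Finset.Icc r (r + (k + 1)),
            ffh k xs (j : ℕ) (xs m)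
              = p.eval (xs m) - (if m = r then p.eval (xs r) else 0) := by
          intro m hm
          rw [Finset.mem_Icc] at hm
          by_cases hmr : m = r
          · subst hmr
            rw [if_pos rfl, sub_self, ffh_high_of_lt hxs hjk (by omega)]
          · rw [if_neg hmr, sub_zero]
            rcases Nat.lt_or_ge m (j : ℕ) with hmj | hmj
            · rw [ffh_high_of_lt hxs hjk hmj]
              exact (phigh_eval_zero (by omega) hmj hjk).symm
            · exact ffh_high_of_ge hxs hjk hmj
        have h2 : ∑ m ∈ Finset.Icc r (r + (k + 1)),
            ddc xs (k+1) r m * (if m = r then p.eval (xs r) else 0)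
            = ddc xs (k+1) r r * p.eval (xs r) := by
          have hsw : ∀ m, ddc xs (k+1) r m * (if m = r then p.eval (xs r) else 0)
              = if m = r then ddc xs (k+1) r m * p.eval (xs r) else 0 := fun m => by
            split <;> simp
          rw [Finset.sum_congr rfl fun m _ => hsw m,
            Finset.sum_ite_eq' (Finset.Icc r (r + (k + 1))) r
              (fun m => ddc xs (k+1) r m * p.eval (xs r)),
            if_pos (Finset.mem_Icc.mpr ⟨le_refl r, by omega⟩)]
        have e1 : ∑ m ∈ Finset.Icc r (r + (k + 1)), ddc xs (k+1) r m * ffh k xs (j : ℕ) (xs m)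
            = (∑ m ∈ Finset.Icc r (r + (k + 1)), ddc xs (k+1) r m * p.eval (xs m))
              - ddc xs (k+1) r r * p.eval (xs r) := by
          rw [← h2, ← Finset.sum_sub_distrib]
          refine Finset.sum_congr rfl fun m hm => ?_
          rw [hsplit m hm, mul_sub]
        rw [e1, dd_sum_icc hxs (k+1) r p (by rw [hp_def, plow_natDegree]; omega) _
          (fun m _ => rfl),
          coeff_eq_zero_of_natDegree_lt (by rw [hp_def, plow_natDegree]; omega)]
        have hA : (∏ ℓ ∈ Finset.Icc (r+1) (r+k), (xs r - xs ℓ)) ≠ 0 :=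
          Finset.prod_ne_zero_iff.mpr fun a ha =>
            xs_sub_ne hxs _ _ (by rw [Finset.mem_Icc] at ha; omega)
        have hddc : ddc xs (k+1) r r
            = ((xs r - xs (i : ℕ)) * ∏ ℓ ∈ Finset.Icc (r+1) (r+k), (xs r - xs ℓ))⁻¹ := by
          unfold ddc
          rw [if_pos (Finset.mem_Icc.mpr (by omega))]
          congr 1
          have e : (Finset.Icc r (r + (k+1))).erase r
              = insert ((i : ℕ)) (Finset.Icc (r+1) (r+k)) := by
            ext a; simp only [Finset.mem_erase, Finset.mem_Icc, Finset.mem_insert]; omega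
          rw [e, Finset.prod_insert (by simp only [Finset.mem_Icc]; omega)]
        have hpr : p.eval (xs r) = ∏ ℓ ∈ Finset.Icc (r+1) (r+k), (xs r - xs ℓ) := by
          rw [hp_def, plow_eval]
          have himg : Finset.Icc (r+1) (r+k) = Finset.image (fun ℓ => r + 1 + ℓ)
              (Finset.range k) := by
            ext a
            simp only [Finset.mem_Icc, Finset.mem_image, Finset.mem_range]
            constructor
            · intro ha; exact ⟨a - (r + 1), by omega, by omega⟩
            · rintro ⟨x, hx, rfl⟩; omega
          rw [himg, Finset.prod_image (fun x _ y _ h => by omega)]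
          refine Finset.prod_congr rfl fun ℓ _ => ?_
          congr 2
          omega
        rw [hddc, hpr]
        have hb : xs r - xs (i : ℕ) ≠ 0 := xs_sub_ne hxs _ _ (by omega)
        field_simp
        ring
      · -- j > i : all node values vanish
        rw [if_neg (fun h => by have := hij.mp h; omega)]
        have hz : ∑ m ∈ Finset.Icc r (r + (k + 1)), ddc xs (k+1) r m * ffh k xs (j : ℕ) (xs m)
            = 0 := by
          refine Finset.sum_eq_zero fun m hm => ?_
          rw [Finset.mem_Icc] at hm
          rw [ffh_high_of_lt hxs hjk (by omega), mul_zero]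
        rw [hz, mul_zero]

end Aux

/-- Inverse representation: the last `n-k-1` rows of `(H^(k))⁻¹` are `(1/k!) D^(k+1)`. -/
theorem ffMatrix_inv_lower_rows (n k : ℕ) (hkn : k + 1 < n) (xs : ℕ → ℝ)
    (hxs : StrictMono xs) (i j : Fin n) (hi : k + 1 ≤ (i : ℕ)) :
    (ffMatrix n k xs)⁻¹ i j =
      (1 / (Nat.factorial k : ℝ)) * Dop xs (k + 1) ((i : ℕ) - (k + 1)) (j : ℕ) := by
  have hBH := BH_eq_one hxs n k hkn
  rw [Matrix.inv_eq_left_inv hBH]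
  simp only [Bmat, Matrix.of_apply]
  rw [if_neg (by omega)]
  rw [Dop_eq' hxs k ((i : ℕ) - (k + 1)) (j : ℕ)]
  have hrk : (i : ℕ) - (k + 1) + (k + 1) = (i : ℕ) := by omega
  rw [hrk]
  have hf : (Nat.factorial k : ℝ) ≠ 0 := by
    exact_mod_cast (Nat.factorial_pos k).ne'
  rw [one_div, ← mul_assoc, inv_mul_cancel₀ hf, one_mul]
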